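/- arXiv:0711.1886 — 2 statements merged into one kernel-verified Lean document; each statement's English description precedes it below -/
import Mathlib

section
/- Let λ = 0 and let x be a solution of the system on [0,∞). Then ‖x(t)‖² ≤ ‖x(0)‖² / (1 + t‖x(0)‖²) for all t ≥ 0; in particular x(t) → 0 as t → ∞, so the origin is globally asymptotically stable at the critical parameter value λ = 0 (the stability hypothesis at criticality required by the attractor bifurcation theorem). -/
open Real Filter Topology

noncomputable def fE (l : ℝ) (x : EuclideanSpace ℝ (Fin 2)) : EuclideanSpace ℝ (Fin 2) :=
  WithLp.toLp 2 (fun i => l * x i - x i ^ 3)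

/-- At the critical parameter value `λ = 0`, any solution of `ẋ = f₀(x)` on `[0,∞)`
satisfies `‖x(t)‖² ≤ ‖x(0)‖² / (1 + t‖x(0)‖²)` for all `t ≥ 0`; in particular
`x(t) → 0` as `t → ∞`, so the origin is globally asymptotically stable at criticality. -/
theorem stmt_6 (x : ℝ → EuclideanSpace ℝ (Fin 2))
    (hx : ∀ t : ℝ, 0 ≤ t → HasDerivAt x (fE 0 (x t)) t) :
    (∀ t : ℝ, 0 ≤ t → ‖x t‖ ^ 2 ≤ ‖x 0‖ ^ 2 / (1 + t * ‖x 0‖ ^ 2)) ∧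
    Tendsto x atTop (nhds 0) := by
  have hu : ∀ (i : Fin 2) (t : ℝ), 0 ≤ t →
      HasDerivAt (fun s => x s i) (-(x t i) ^ 3) t := by
    intro i t ht
    have := (EuclideanSpace.proj i).hasFDerivAt.comp_hasDerivAt t (hx t ht)
    simp [fE] at this; exact this
  set V : ℝ → ℝ := fun t => (x t 0) ^ 2 + (x t 1) ^ 2 with hVdef
  have hVnorm : ∀ t, ‖x t‖ ^ 2 = V t := by
    intro t
    rw [EuclideanSpace.norm_eq, Real.sq_sqrt (by positivity)]
    simp [hVdef, Fin.sum_univ_two, sq_abs]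
  set V' : ℝ → ℝ := fun t => -2 * ((x t 0) ^ 4 + (x t 1) ^ 4) with hV'def
  have hV : ∀ t : ℝ, 0 ≤ t → HasDerivAt V (V' t) t := by
    intro t ht
    have := ((hu 0 t ht).pow 2).add ((hu 1 t ht).pow 2)
    refine this.congr_deriv ?_
    simp [hV'def]; ring
  have hVnonneg : ∀ t, 0 ≤ V t := fun t => by positivity
  have hV'le : ∀ t, V' t ≤ -(V t) ^ 2 := by
    intro t; simp only [hV'def, hVdef]; nlinarith [sq_nonneg ((x t 0)^2 - (x t 1)^2)]
  have hVcont : ContinuousOn V (Set.Ici 0) :=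
    fun t ht => ((hV t ht).continuousAt).continuousWithinAt
  have hanti : AntitoneOn V (Set.Ici 0) := by
    apply antitoneOn_of_hasDerivWithinAt_nonpos (convex_Ici 0) hVcont
    · intro t ht
      exact (hV t (le_of_lt (by simpa using ht))).hasDerivWithinAt
    · intro t ht
      exact (hV'le t).trans (neg_nonpos.mpr (sq_nonneg _))
  -- main inequality
  have key : ∀ t : ℝ, 0 ≤ t → V t * (1 + t * V 0) ≤ V 0 := by
    intro t ht
    rcases eq_or_lt_of_le (hVnonneg t) with h0 | hpos
    · rw [← h0]; simpa using hVnonneg 0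
    · -- V > 0 on [0, t]
      have hVpos : ∀ s ∈ Set.Icc (0:ℝ) t, 0 < V s := by
        intro s hs
        exact lt_of_lt_of_le hpos (hanti hs.1 (Set.mem_Ici.mpr ht) hs.2)
      -- φ s = 1/V s - s is monotone on [0,t]
      set φ : ℝ → ℝ := fun s => (V s)⁻¹ - s with hφdef
      have hφmono : MonotoneOn φ (Set.Icc 0 t) := by
        apply monotoneOn_of_hasDerivWithinAt_nonneg (convex_Icc 0 t)
          (f' := fun s => -V' s / (V s) ^ 2 - 1)
        · exact ((hVcont.mono (Set.Icc_subset_Ici_self)).inv₀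
            (fun s hs => (hVpos s hs).ne')).sub continuousOn_id
        · intro s hs
          have hs' : s ∈ Set.Icc (0:ℝ) t := interior_subset hs
          have := ((hV s hs'.1).inv (hVpos s hs').ne').sub (hasDerivAt_id s)
          exact (this.hasDerivWithinAt).mono (by
            simpa using (interior_subset : interior (Set.Icc (0:ℝ) t) ⊆ _))
        · intro s hs
          have hs' : s ∈ Set.Icc (0:ℝ) t := interior_subset hs
          have h1 := hV'le s
          have h2 := hVpos s hs'
          have h3 : (V s) ^ 2 ≤ -V' s := by nlinarith
          have h4 : (1:ℝ) ≤ -V' s / (V s) ^ 2 := (one_le_div (by positivity)).mpr h3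
          linarith
      -- conclude
      have := hφmono (Set.left_mem_Icc.mpr ht) (Set.right_mem_Icc.mpr ht) ht
      have hV0pos : 0 < V 0 := hVpos 0 (Set.left_mem_Icc.mpr ht)
      simp only [hφdef] at this
      -- (V 0)⁻¹ - 0 ≤ (V t)⁻¹ - t
      have h5 : (V 0)⁻¹ + t ≤ (V t)⁻¹ := by linarith [this]
      have h6 : (1 + t * V 0) / V 0 ≤ (V t)⁻¹ := by
        rw [add_div, mul_div_assoc, div_self hV0pos.ne', one_div]
        linarith
      have h7 : V t * ((1 + t * V 0) / V 0) ≤ V t * (V t)⁻¹ :=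
        mul_le_mul_of_nonneg_left h6 (hVnonneg t)
      rw [mul_inv_cancel₀ hpos.ne'] at h7
      calc V t * (1 + t * V 0) = (V t * ((1 + t * V 0) / V 0)) * V 0 := by
            field_simp
        _ ≤ 1 * V 0 := mul_le_mul_of_nonneg_right h7 hV0pos.le
        _ = V 0 := one_mul _
  have hmain : ∀ t : ℝ, 0 ≤ t → ‖x t‖ ^ 2 ≤ ‖x 0‖ ^ 2 / (1 + t * ‖x 0‖ ^ 2) := by
    intro t ht
    rw [hVnorm, hVnorm]
    have hden : 0 < 1 + t * V 0 := by nlinarith [hVnonneg 0]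
    rw [le_div_iff₀ hden]
    exact key t ht
  refine ⟨hmain, ?_⟩
  have hb : ∀ t : ℝ, 1 ≤ t → ‖x t‖ ≤ Real.sqrt t⁻¹ := by
    intro t ht
    have ht0 : (0:ℝ) < t := lt_of_lt_of_le one_pos ht
    have h1 : ‖x t‖ ^ 2 ≤ t⁻¹ := by
      refine (hmain t ht0.le).trans ?_
      rcases eq_or_lt_of_le (sq_nonneg ‖x 0‖) with h | h
      · rw [← h]; simp; positivity
      · rw [div_le_iff₀ (by nlinarith), inv_mul_eq_div, le_div_iff₀ ht0]
        nlinarith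
    calc ‖x t‖ = Real.sqrt (‖x t‖ ^ 2) := (Real.sqrt_sq (norm_nonneg _)).symm
      _ ≤ Real.sqrt t⁻¹ := Real.sqrt_le_sqrt h1
  rw [tendsto_zero_iff_norm_tendsto_zero]
  have hs : Tendsto (fun t : ℝ => Real.sqrt t⁻¹) atTop (nhds 0) := by
    have h := tendsto_inv_atTop_zero (𝕜 := ℝ)
    have h2 := (Real.continuous_sqrt.tendsto 0).comp h
    simpa [Function.comp_def] using h2
  exact squeeze_zero' (Filter.Eventually.of_forall fun t => norm_nonneg _)
    (Filter.eventually_atTop.2 ⟨1, hb⟩) hs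
end

section
/- Let λ > 0 and let x be a solution of the planar system on [0,∞) with x₁(0) ≠ 0 and x₂(0) ≠ 0. Then x(t) → (σ₁√λ, σ₂√λ) as t → ∞, where σᵢ = 1 if xᵢ(0) > 0 and σᵢ = −1 if xᵢ(0) < 0; that is, every orbit starting off the two coordinate axes converges to one of the four stable nodes of the bifurcated attractor, so the four nodes are the minimal attractors and their basins are the four open quadrants. -/
open Real Filter Topology
open Set intervalIntegral

lemma pitchfork (l : ℝ) (hl : 0 < l) (y : ℝ → ℝ)
    (hy : ∀ t : ℝ, 0 ≤ t → HasDerivAt y (l * y t - y t ^ 3) t)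
    (h0 : y 0 ≠ 0) :
    Tendsto y atTop (nhds (if 0 < y 0 then Real.sqrt l else -Real.sqrt l)) := by
  have hcont : ContinuousOn y (Ici 0) := fun t ht => ((hy t ht).continuousAt).continuousWithinAt
  set g : ℝ → ℝ := fun s => l - y s ^ 2 with hgdef
  have hgcont : ContinuousOn g (Ici 0) := continuousOn_const.sub ((hcont.pow 2))
  set φ : ℝ → ℝ := fun t => ∫ s in (0:ℝ)..t, g s with hφdef
  have hφd : ∀ t : ℝ, 0 ≤ t → HasDerivWithinAt φ (g t) (Ici t) t := by
    intro t ht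
    apply intervalIntegral.integral_hasDerivWithinAt_right (t := Ioi t)
    · exact (hgcont.mono (by rw [uIcc_of_le ht]; exact Icc_subset_Ici_self)).intervalIntegrable
    · exact (hgcont.mono ((Ioi_subset_Ici le_rfl).trans (Ici_subset_Ici.mpr ht))).stronglyMeasurableAtFilter_nhdsWithin measurableSet_Ioi t
    · exact (hgcont t ht).mono ((Ioi_subset_Ici le_rfl).trans (Ici_subset_Ici.mpr ht))
  have hgat : ∀ t : ℝ, 0 ≤ t → ContinuousAt g t := fun t ht =>
    continuousAt_const.sub (((hy t ht).continuousAt).pow 2)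
  have hφd' : ∀ t : ℝ, 0 < t → HasDerivAt φ (g t) t := by
    intro t ht
    apply intervalIntegral.integral_hasDerivAt_right
    · exact (hgcont.mono (by rw [uIcc_of_le ht.le]; exact Icc_subset_Ici_self)).intervalIntegrable
    · exact ContinuousOn.stronglyMeasurableAtFilter isOpen_Ioi
        (hgcont.mono (Ioi_subset_Ici le_rfl)) t ht
    · exact hgat t ht.le
  have hφcont : ContinuousOn φ (Ici 0) := by
    intro t ht
    rcases eq_or_lt_of_le (mem_Ici.mp ht) with h|h
    · subst h; exact (hφd 0 le_rfl).continuousWithinAt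
    · exact ((hφd' t h).continuousAt).continuousWithinAt
  -- Step 1: sign preservation: y t = y 0 * exp (φ t)
  have hconst1 : ∀ T : ℝ, 0 ≤ T → y T * Real.exp (-φ T) = y 0 := by
    intro T hT
    have := constant_of_has_deriv_right_zero
      (f := fun t => y t * Real.exp (-φ t)) (a := 0) (b := T)
      (by
        apply ContinuousOn.mul (hcont.mono (Icc_subset_Ici_self))
        exact (Real.continuous_exp.comp_continuousOn
          ((hφcont.mono (Icc_subset_Ici_self)).neg)))
      (by
        intro u hu
        have hu0 : (0:ℝ) ≤ u := hu.1
        have hd : HasDerivWithinAt (fun t => y t * Real.exp (-φ t))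
            ((l * y u - y u ^ 3) * Real.exp (-φ u)
              + y u * (Real.exp (-φ u) * -(g u))) (Ici u) u := by
          exact ((hy u hu0).hasDerivWithinAt).mul (((hφd u hu0).neg).exp)
        apply hd.congr_deriv
        show (l * y u - y u ^ 3) * Real.exp (-φ u) + y u * (Real.exp (-φ u) * -(l - y u ^ 2)) = (0:ℝ)
        ring)
      T (right_mem_Icc.mpr hT)
    have hφ0 : φ 0 = 0 := by simp [hφdef]
    simpa [hφ0] using this
  have hyeq : ∀ t : ℝ, 0 ≤ t → y t = y 0 * Real.exp (φ t) := by
    intro t ht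
    have h := hconst1 t ht
    field_simp [Real.exp_ne_zero, Real.exp_neg] at h ⊢
    rw [← h, mul_assoc, ← Real.exp_add, neg_add_cancel, Real.exp_zero, mul_one]
  have hyne : ∀ t : ℝ, 0 ≤ t → y t ≠ 0 := by
    intro t ht
    rw [hyeq t ht]
    exact mul_ne_zero h0 (Real.exp_ne_zero _)
  -- Step 2: v = (y^2)⁻¹ satisfies linear ODE; w constant
  set v : ℝ → ℝ := fun t => (y t ^ 2)⁻¹ with hvdef
  have hvcont : ContinuousOn v (Ici 0) := (hcont.pow 2).inv₀ (fun t ht => pow_ne_zero 2 (hyne t ht))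
  have hconst2 : ∀ T : ℝ, 0 ≤ T →
      (v T - l⁻¹) * Real.exp (2 * l * T) = v 0 - l⁻¹ := by
    intro T hT
    have := constant_of_has_deriv_right_zero
      (f := fun t => (v t - l⁻¹) * Real.exp (2 * l * t)) (a := 0) (b := T)
      (by
        apply ContinuousOn.mul ((hvcont.mono Icc_subset_Ici_self).sub continuousOn_const)
        exact (Real.continuous_exp.comp (continuous_const.mul continuous_id)).continuousOn)
      (by
        intro u hu
        have hu0 : (0:ℝ) ≤ u := hu.1
        have hyne' : y u ≠ 0 := hyne u hu0
        have hy2 : HasDerivAt (fun t => y t ^ 2)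
            (2 * y u ^ 1 * (l * y u - y u ^ 3)) u := by
          simpa using (hy u hu0).fun_pow 2
        have hv : HasDerivAt v
            (-(2 * y u ^ 1 * (l * y u - y u ^ 3)) / (y u ^ 2) ^ 2) u :=
          hy2.inv (pow_ne_zero 2 hyne')
        have he : HasDerivAt (fun t : ℝ => Real.exp (2 * l * t))
            (Real.exp (2 * l * u) * (2 * l)) u := by
          simpa [mul_comm] using (((hasDerivAt_id u).const_mul (2 * l)).exp)
        have hd : HasDerivAt (fun t => (v t - l⁻¹) * Real.exp (2 * l * t))
            ((-(2 * y u ^ 1 * (l * y u - y u ^ 3)) / (y u ^ 2) ^ 2) * Real.exp (2 * l * u)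
              + (v u - l⁻¹) * (Real.exp (2 * l * u) * (2 * l))) u :=
          (hv.sub_const _).mul he
        apply hd.hasDerivWithinAt.congr_deriv
        simp only [hvdef]
        field_simp
        ring)
      T (right_mem_Icc.mpr hT)
    simpa using this
  -- Step 3: limits
  have hexp : Tendsto (fun t : ℝ => Real.exp (-(2 * l * t))) atTop (nhds 0) := by
    apply Real.tendsto_exp_atBot.comp
    exact tendsto_neg_atBot_iff.mpr (tendsto_id.const_mul_atTop (by positivity))
  have hv_lim : Tendsto v atTop (nhds l⁻¹) := by
    have : Tendsto (fun t : ℝ => l⁻¹ + (v 0 - l⁻¹) * Real.exp (-(2 * l * t))) atTop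
        (nhds (l⁻¹ + (v 0 - l⁻¹) * 0)) :=
      tendsto_const_nhds.add (tendsto_const_nhds.mul hexp)
    rw [mul_zero, add_zero] at this
    apply this.congr'
    filter_upwards [eventually_ge_atTop (0:ℝ)] with t ht
    have h := hconst2 t ht
    have he : Real.exp (2 * l * t) ≠ 0 := Real.exp_ne_zero _
    rw [Real.exp_neg]
    field_simp at h ⊢
    linarith [h]
  have hy2_lim : Tendsto (fun t => y t ^ 2) atTop (nhds l) := by
    have := hv_lim.inv₀ (by positivity)
    rw [inv_inv] at this
    apply this.congr'
    filter_upwards [eventually_ge_atTop (0:ℝ)] with t ht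
    simp [hvdef]
  have hsqrt : Tendsto (fun t => Real.sqrt (y t ^ 2)) atTop (nhds (Real.sqrt l)) :=
    (Real.continuous_sqrt.continuousAt).tendsto.comp hy2_lim
  rcases lt_or_gt_of_ne h0 with hneg | hpos
  · rw [if_neg (not_lt.mpr hneg.le)]
    have : Tendsto (fun t => -Real.sqrt (y t ^ 2)) atTop (nhds (-Real.sqrt l)) := hsqrt.neg
    apply this.congr'
    filter_upwards [eventually_ge_atTop (0:ℝ)] with t ht
    have hypos : y t < 0 := by
      rw [hyeq t ht]
      exact mul_neg_of_neg_of_pos hneg (Real.exp_pos _)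
    rw [Real.sqrt_sq_eq_abs, abs_of_neg hypos, neg_neg]
  · rw [if_pos hpos]
    apply hsqrt.congr'
    filter_upwards [eventually_ge_atTop (0:ℝ)] with t ht
    have hypos : 0 < y t := by
      rw [hyeq t ht]
      exact mul_pos hpos (Real.exp_pos _)
    rw [Real.sqrt_sq_eq_abs, abs_of_pos hypos]

/-- The model vector field `f_λ(x₁, x₂) = (λx₁ − x₁³, λx₂ − x₂³)` on `ℝ²`. -/
def fPlanar (l : ℝ) (x : ℝ × ℝ) : ℝ × ℝ :=
  (l * x.1 - x.1 ^ 3, l * x.2 - x.2 ^ 3)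

/-- For `λ > 0`, every solution of the planar system on `[0,∞)` starting off the two
coordinate axes converges to the stable node `(σ₁√λ, σ₂√λ)`, where `σᵢ = 1` if
`xᵢ(0) > 0` and `σᵢ = −1` if `xᵢ(0) < 0`: the basins of the four nodes are the four
open quadrants. -/
theorem stmt_13 (l : ℝ) (hl : 0 < l) (x : ℝ → ℝ × ℝ)
    (hx : ∀ t : ℝ, 0 ≤ t → HasDerivAt x (fPlanar l (x t)) t)
    (h1 : (x 0).1 ≠ 0) (h2 : (x 0).2 ≠ 0) :
    Tendsto x atTop
      (nhds ((if 0 < (x 0).1 then Real.sqrt l else -Real.sqrt l),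
             (if 0 < (x 0).2 then Real.sqrt l else -Real.sqrt l))) := by
  have hd1 : ∀ t : ℝ, 0 ≤ t → HasDerivAt (fun t => (x t).1)
      (l * (x t).1 - (x t).1 ^ 3) t := by
    intro t ht
    have := (ContinuousLinearMap.fst ℝ ℝ ℝ).hasFDerivAt.comp_hasDerivAt t (hx t ht)
    simpa [fPlanar, Function.comp_def] using this
  have hd2 : ∀ t : ℝ, 0 ≤ t → HasDerivAt (fun t => (x t).2)
      (l * (x t).2 - (x t).2 ^ 3) t := by
    intro t ht
    have := (ContinuousLinearMap.snd ℝ ℝ ℝ).hasFDerivAt.comp_hasDerivAt t (hx t ht)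
    simpa [fPlanar, Function.comp_def] using this
  have t1 := pitchfork l hl (fun t => (x t).1) hd1 h1
  have t2 := pitchfork l hl (fun t => (x t).2) hd2 h2
  have := t1.prodMk_nhds t2
  simpa using this
end
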